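/- For every nonnegative integer n and complex number x, let H_n(x) = ∑_{k=0}^n (2x+1)·C(x,k)·C(x+k,k)·(-2)^k / ((2k+1)·C(2k,k)). Then H_n(x) + H_n(x+2) = (-1)^n · 2^{n+1} · (2x+3) · C(x+1,n)·C(x+1+n,n) / ((2n+1)·C(2n,n)). -/

import Mathlib

open Finset

/-- Generalized binomial coefficient `C(x,k) = x(x-1)⋯(x-k+1)/k!`. -/
noncomputable def gbinom (x : ℂ) (k : ℕ) : ℂ :=
  (∏ i ∈ Finset.range k, (x - i)) / (k.factorial : ℂ)

/-- `H_n(x) = ∑_{k=0}^n (2x+1)·C(x,k)·C(x+k,k)·(-2)^k / ((2k+1)·C(2k,k))`. -/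
noncomputable def H (n : ℕ) (x : ℂ) : ℂ :=
  ∑ k ∈ Finset.range (n + 1),
    (2 * x + 1) * gbinom x k * gbinom (x + k) k * (-2 : ℂ) ^ k /
      ((2 * k + 1) * (Nat.choose (2 * k) k : ℂ))

noncomputable def S' (n : ℕ) (x : ℂ) : ℂ :=
  ∑ k ∈ Finset.range (n + 1),
    (2 * x + 1) * (-1 : ℂ) ^ k * 2 ^ k * (∏ i ∈ Finset.range (2 * k), (x + k - i)) /
      ((2 * k + 1).factorial : ℂ)

lemma prod_split (x : ℂ) (k : ℕ) :
    (∏ i ∈ Finset.range (2 * k), (x + k - i)) =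
      (∏ i ∈ Finset.range k, (x + k - i)) * ∏ i ∈ Finset.range k, (x - i) := by
  rw [two_mul, Finset.prod_range_add]
  congr 1
  refine Finset.prod_congr rfl fun i _ => ?_
  push_cast
  ring

lemma fac_id (k : ℕ) :
    ((2 * k + 1).factorial : ℂ) =
      (2 * k + 1) * ((2 * k).choose k : ℂ) * (k.factorial : ℂ) ^ 2 := by
  have h : (2 * k).choose k * k.factorial * k.factorial = (2 * k).factorial := by
    have := Nat.choose_mul_factorial_mul_factorial (show k ≤ 2 * k by omega)
    simpa [two_mul, Nat.add_sub_cancel] using this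
  have h2 : (2 * k + 1).factorial = (2 * k + 1) * (2 * k).factorial := Nat.factorial_succ _
  rw [h2, ← h]
  push_cast
  ring

lemma H_eq_S' (n : ℕ) (x : ℂ) : H n x = S' n x := by
  unfold H S'
  refine Finset.sum_congr rfl fun k _ => ?_
  rw [gbinom, gbinom, prod_split, fac_id]
  have h1 : (k.factorial : ℂ) ≠ 0 := Nat.cast_ne_zero.2 (Nat.factorial_ne_zero k)
  have h2 : ((2 * k).choose k : ℂ) ≠ 0 :=
    Nat.cast_ne_zero.2 (Nat.choose_pos (show k ≤ 2 * k by omega)).ne'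
  have h3 : (2 * (k : ℂ) + 1) ≠ 0 := by
    have : ((2 * k + 1 : ℕ) : ℂ) ≠ 0 := Nat.cast_ne_zero.2 (by omega)
    push_cast at this
    exact this
  rw [show ((-2:ℂ)) = (-1)*2 by norm_num, mul_pow]
  field_simp

lemma S'_main (n : ℕ) (x : ℂ) :
    S' n x + S' n (x + 2) =
      (-1 : ℂ) ^ n * 2 ^ (n + 1) * (2 * x + 3) *
        (∏ i ∈ Finset.range (2 * n), (x + 1 + n - i)) / ((2 * n + 1).factorial : ℂ) := by
  induction n with
  | zero => simp [S']; ring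
  | succ n ih =>
    have hS : ∀ y : ℂ, S' (n + 1) y = S' n y +
        (2 * y + 1) * (-1 : ℂ) ^ (n + 1) * 2 ^ (n + 1) *
          (∏ i ∈ Finset.range (2 * (n + 1)), (y + ((n + 1 : ℕ) : ℂ) - i)) /
          ((2 * (n + 1) + 1).factorial : ℂ) := by
      intro y
      unfold S'
      rw [Finset.sum_range_succ]
    have e1 : 2 * (n + 1) = 2 * n + 1 + 1 := by ring
    have p1 : (∏ i ∈ Finset.range (2 * (n + 1)), (x + ((n + 1 : ℕ) : ℂ) - i)) =
        (∏ i ∈ Finset.range (2 * n), (x + 1 + (n : ℂ) - i)) * (x + 1 - n) * (x - n) := by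
      rw [e1, Finset.prod_range_succ, Finset.prod_range_succ]
      have : (∏ i ∈ Finset.range (2 * n), (x + ((n + 1 : ℕ) : ℂ) - i)) =
          ∏ i ∈ Finset.range (2 * n), (x + 1 + (n : ℂ) - i) :=
        Finset.prod_congr rfl fun i _ => by push_cast; ring
      rw [this]
      push_cast
      ring
    have p2 : (∏ i ∈ Finset.range (2 * (n + 1)), (x + 2 + ((n + 1 : ℕ) : ℂ) - i)) =
        (x + (n : ℂ) + 3) * (x + (n : ℂ) + 2) *
          ∏ i ∈ Finset.range (2 * n), (x + 1 + (n : ℂ) - i) := by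
      rw [e1, Finset.prod_range_succ', Finset.prod_range_succ']
      have : (∏ i ∈ Finset.range (2 * n), (x + 2 + ((n + 1 : ℕ) : ℂ) - ((i + 1 + 1 : ℕ) : ℂ))) =
          ∏ i ∈ Finset.range (2 * n), (x + 1 + (n : ℂ) - i) :=
        Finset.prod_congr rfl fun i _ => by push_cast; ring
      rw [this]
      push_cast
      ring
    have p3 : (∏ i ∈ Finset.range (2 * (n + 1)), (x + 1 + ((n + 1 : ℕ) : ℂ) - i)) =
        (x + (n : ℂ) + 2) * (x + 1 - n) *
          ∏ i ∈ Finset.range (2 * n), (x + 1 + (n : ℂ) - i) := by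
      rw [e1, Finset.prod_range_succ']
      rw [Finset.prod_range_succ]
      have : (∏ i ∈ Finset.range (2 * n), (x + 1 + ((n + 1 : ℕ) : ℂ) - ((i + 1 : ℕ) : ℂ))) =
          ∏ i ∈ Finset.range (2 * n), (x + 1 + (n : ℂ) - i) :=
        Finset.prod_congr rfl fun i _ => by push_cast; ring
      rw [this]
      push_cast
      ring
    have hf : ((2 * (n + 1) + 1).factorial : ℂ) =
        (2 * (n : ℂ) + 3) * (2 * (n : ℂ) + 2) * ((2 * n + 1).factorial : ℂ) := by
      have e2 : 2 * (n + 1) + 1 = (2 * n + 1) + 1 + 1 := by ring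
      rw [e2, Nat.factorial_succ, Nat.factorial_succ]
      push_cast
      ring
    rw [hS, hS]
    rw [show ∀ a b c d : ℂ, (a + c) + (b + d) = (a + b) + (c + d) from
      fun a b c d => by ring]
    rw [ih, p1, p2, p3, hf]
    have hz1 : ((2 * n + 1).factorial : ℂ) ≠ 0 :=
      Nat.cast_ne_zero.2 (Nat.factorial_ne_zero _)
    have hz2 : (2 * (n : ℂ) + 3) ≠ 0 := by
      have : ((2 * n + 3 : ℕ) : ℂ) ≠ 0 := Nat.cast_ne_zero.2 (by omega)
      push_cast at this
      exact this
    have hz3 : (2 * (n : ℂ) + 2) ≠ 0 := by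
      have : ((2 * n + 2 : ℕ) : ℂ) ≠ 0 := Nat.cast_ne_zero.2 (by omega)
      push_cast at this
      exact this
    field_simp
    ring

theorem stmt4 (n : ℕ) (x : ℂ) :
    H n x + H n (x + 2) =
      (-1 : ℂ) ^ n * 2 ^ (n + 1) * (2 * x + 3) * gbinom (x + 1) n * gbinom (x + 1 + n) n /
        ((2 * n + 1) * (Nat.choose (2 * n) n : ℂ)) := by
  rw [H_eq_S', H_eq_S', S'_main]
  rw [gbinom, gbinom]
  have hsplit : (∏ i ∈ Finset.range (2 * n), (x + 1 + n - i)) =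
      (∏ i ∈ Finset.range n, (x + 1 + n - i)) * ∏ i ∈ Finset.range n, (x + 1 - i) :=
    prod_split (x + 1) n
  rw [hsplit, fac_id]
  have h1 : (n.factorial : ℂ) ≠ 0 := Nat.cast_ne_zero.2 (Nat.factorial_ne_zero n)
  have h2 : ((2 * n).choose n : ℂ) ≠ 0 :=
    Nat.cast_ne_zero.2 (Nat.choose_pos (show n ≤ 2 * n by omega)).ne'
  have h3 : (2 * (n : ℂ) + 1) ≠ 0 := by
    have : ((2 * n + 1 : ℕ) : ℂ) ≠ 0 := Nat.cast_ne_zero.2 (by omega)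
    push_cast at this
    exact this
  field_simp
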